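/- Let K ⊂ ℝ² be a compact connected set with Minkowski perimeter P(K) := lim_{ε→0} (|K^ε| − |K|)/ε, where K^ε is the ε-neighborhood of K. Then the diameter of K satisfies D(K) ≤ P(K)/2. -/

import Mathlib

open MeasureTheory Metric
open scoped RealInnerProductSpace

private lemma key_vol (K : Set (EuclideanSpace ℝ (Fin 2))) (hK : IsCompact K)
    (hconn : IsPreconnected K) {a b : EuclideanSpace ℝ (Fin 2)}
    (ha : a ∈ K) (hb : b ∈ K) (hab : a ≠ b) {ε : ℝ} (hε : 0 < ε) :
    volume K + ENNReal.ofReal (2 * ε * dist a b) ≤ volume (cthickening ε K) := by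
  classical
  set d : ℝ := dist a b with hd_def
  have hd : 0 < d := dist_pos.2 hab
  set u : EuclideanSpace ℝ (Fin 2) := (d⁻¹ : ℝ) • (b - a) with hu_def
  have hba : ‖b - a‖ = d := by rw [← dist_eq_norm, dist_comm]
  have hu : ‖u‖ = 1 := by
    rw [hu_def, norm_smul, hba, Real.norm_eq_abs, abs_of_pos (by positivity)]
    field_simp
  set v : EuclideanSpace ℝ (Fin 2) := (WithLp.equiv 2 (Fin 2 → ℝ)).symm ![-(u 1), u 0] with hv
  have hv0 : v 0 = -(u 1) := rfl
  have hv1 : v 1 = u 0 := rfl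
  have huv : (⟪u, v⟫ : ℝ) = 0 := by
    simp [PiLp.inner_apply, RCLike.inner_apply, Fin.sum_univ_two, hv0, hv1]
    ring
  have hvu : (⟪v, u⟫ : ℝ) = 0 := by rw [real_inner_comm]; exact huv
  have hvn : ‖v‖ = 1 := by
    rw [EuclideanSpace.norm_eq] at hu ⊢
    rw [show ∑ i, ‖v i‖^2 = ∑ i, ‖u i‖^2 by
      simp [Fin.sum_univ_two, hv0, hv1]; ring]
    exact hu
  have hu2 : (⟪u, u⟫ : ℝ) = 1 := by rw [real_inner_self_eq_norm_sq, hu]; norm_num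
  have hv2 : (⟪v, v⟫ : ℝ) = 1 := by rw [real_inner_self_eq_norm_sq, hvn]; norm_num
  have hon : Orthonormal ℝ ![u, v] := by
    rw [orthonormal_iff_ite]
    intro i j
    fin_cases i <;> fin_cases j <;>
      simp only [Matrix.cons_val_zero, Matrix.cons_val_one, Matrix.head_cons, Fin.mk_zero,
        Fin.mk_one] <;> simp [huv, hvu, hu2, hv2, hu, hvn]
  have hcard : Fintype.card (Fin 2) = Module.finrank ℝ (EuclideanSpace ℝ (Fin 2)) := by
    simp [finrank_euclideanSpace_fin]
  let Bb : Module.Basis (Fin 2) ℝ (EuclideanSpace ℝ (Fin 2)) :=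
    basisOfLinearIndependentOfCardEqFinrank hon.linearIndependent hcard
  have hBb : ⇑Bb = ![u, v] := coe_basisOfLinearIndependentOfCardEqFinrank _ _
  let B : OrthonormalBasis (Fin 2) ℝ (EuclideanSpace ℝ (Fin 2)) :=
    Bb.toOrthonormalBasis (by rw [hBb]; exact hon)
  have hB : ⇑B = ![u, v] := by rw [Module.Basis.coe_toOrthonormalBasis, hBb]
  let ψ : EuclideanSpace ℝ (Fin 2) ≃ᵐ ℝ × ℝ :=
    B.measurableEquiv.trans ((MeasurableEquiv.toLp 2 (Fin 2 → ℝ)).symm.trans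
      MeasurableEquiv.finTwoArrow)
  have hψ : MeasurePreserving ψ volume volume :=
    ((volume_preserving_finTwoArrow ℝ).comp
      (EuclideanSpace.volume_preserving_symm_measurableEquiv_toLp (Fin 2))).comp
      B.measurePreserving_measurableEquiv
  set f : EuclideanSpace ℝ (Fin 2) → ℝ := fun x => (⟪u, x⟫ : ℝ) with hf_def
  set g : EuclideanSpace ℝ (Fin 2) → ℝ := fun x => (⟪v, x⟫ : ℝ) with hg_def
  have hψx : ∀ x, ψ x = (f x, g x) := by
    intro x
    show MeasurableEquiv.finTwoArrow ((MeasurableEquiv.toLp 2 (Fin 2 → ℝ)).symm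
      (B.measurableEquiv x)) = _
    have h0 : B.measurableEquiv x = B.repr x := rfl
    have : ∀ i, B.repr x i = (⟪![u,v] i, x⟫ : ℝ) := fun i => by
      rw [B.repr_apply_apply, hB]
    ext <;> simp [h0, MeasurableEquiv.finTwoArrow, MeasurableEquiv.coe_toLp, this,
      hf_def, hg_def]
  have hf : Continuous f := continuous_const.inner continuous_id
  have hg : Continuous g := continuous_const.inner continuous_id
  have hfK : IsCompact (f '' K) := hK.image hf
  have hfKne : (f '' K).Nonempty := ⟨f a, a, ha, rfl⟩
  set m : ℝ := sInf (f '' K) with hm_def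
  set M : ℝ := sSup (f '' K) with hM_def
  have hmem : ∀ x ∈ K, f x ∈ Set.Icc m M := fun x hx =>
    ⟨csInf_le hfK.bddBelow ⟨x, hx, rfl⟩, le_csSup hfK.bddAbove ⟨x, hx, rfl⟩⟩
  have hfbfa : f b - f a = d := by
    have h1 : f b - f a = d⁻¹ * (⟪b - a, b - a⟫ : ℝ) := by
      simp only [hf_def, hu_def, real_inner_smul_left]
      rw [← mul_sub, ← inner_sub_right]
    rw [h1, real_inner_self_eq_norm_sq, hba]
    field_simp
  have hdMm : d ≤ M - m := by
    have h1 := (hmem a ha).1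
    have h2 := (hmem b hb).2
    linarith
  have hIcc : Set.Icc m M ⊆ f '' K :=
    (hconn.image f hf.continuousOn).Icc_subset (hfK.sInf_mem hfKne) (hfK.sSup_mem hfKne)
  -- image sets
  set A : Set (ℝ × ℝ) := ψ '' K with hA_def
  set S : Set (ℝ × ℝ) := ψ '' (cthickening ε K) with hS_def
  have hKε : IsCompact (cthickening ε K) :=
    Metric.isCompact_of_isClosed_isBounded isClosed_cthickening hK.isBounded.cthickening
  have hψc : Continuous ψ := by
    have : (⇑ψ) = fun x => (f x, g x) := funext hψx
    rw [this]; exact hf.prodMk hg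
  have hA : IsCompact A := hK.image hψc
  have hS : IsCompact S := hKε.image hψc
  have hAm : MeasurableSet A := hA.isClosed.measurableSet
  have hSm : MeasurableSet S := hS.isClosed.measurableSet
  have hvolA : volume A = volume K := by
    rw [hA_def, ψ.image_eq_preimage_symm]
    exact (MeasurePreserving.symm ψ hψ).measure_preimage hK.isClosed.measurableSet.nullMeasurableSet
  have hvolS : volume S = volume (cthickening ε K) := by
    rw [hS_def, ψ.image_eq_preimage_symm]
    exact (MeasurePreserving.symm ψ hψ).measure_preimage hKε.isClosed.measurableSet.nullMeasurableSet
  have hAS : A ⊆ S := Set.image_mono (self_subset_cthickening K)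
  -- vertical translation stays in S
  have hslice : ∀ p ∈ A, ∀ s : ℝ, |s| ≤ ε → (p.1, p.2 + s) ∈ S := by
    rintro p ⟨x, hx, rfl⟩ s hs
    refine ⟨x + s • v, mem_cthickening_of_dist_le _ x ε _ hx ?_, ?_⟩
    · rw [dist_eq_norm, add_sub_cancel_left, norm_smul, hvn, mul_one, Real.norm_eq_abs]
      exact hs
    · rw [hψx, hψx]
      simp only [hf_def, hg_def, inner_add_right, real_inner_smul_right, huv, hv2,
        mul_zero, add_zero, mul_one, Prod.mk.injEq]
  have hA1 : ∀ p ∈ A, p.1 ∈ Set.Icc m M := by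
    rintro p ⟨x, hx, rfl⟩
    rw [hψx]
    exact hmem x hx
  -- slice estimate
  have hslice_est : ∀ t ∈ Set.Icc m M,
      volume (Prod.mk t ⁻¹' A) + ENNReal.ofReal ε + ENNReal.ofReal ε
        ≤ volume (Prod.mk t ⁻¹' S) := by
    intro t ht
    set At := Prod.mk t ⁻¹' A with hAt_def
    set St := Prod.mk t ⁻¹' S with hSt_def
    have hAtS : At ⊆ St := fun y hy => hAS hy
    have hAt_ne : At.Nonempty := by
      obtain ⟨x, hx, hfx⟩ := hIcc ht
      refine ⟨g x, ?_⟩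
      have : ψ x ∈ A := Set.mem_image_of_mem _ hx
      rwa [hψx, hfx] at this
    have hAt_cl : IsClosed At := hA.isClosed.preimage (Continuous.prodMk_right t)
    have hAt_cpt : IsCompact At := by
      refine (hA.image continuous_snd).of_isClosed_subset hAt_cl ?_
      intro y hy
      exact ⟨(t, y), hy, rfl⟩
    set yU : ℝ := sSup At with hyp_def
    set yL : ℝ := sInf At with hym_def
    have hyU : yU ∈ At := hAt_cpt.sSup_mem hAt_ne
    have hyL : yL ∈ At := hAt_cpt.sInf_mem hAt_ne
    have hub : ∀ y ∈ At, y ≤ yU := fun y hy => le_csSup hAt_cpt.bddAbove hy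
    have hlb : ∀ y ∈ At, yL ≤ y := fun y hy => csInf_le hAt_cpt.bddBelow hy
    have hymp : yL ≤ yU := hub _ hyL
    have hIoc : Set.Ioc yU (yU + ε) ⊆ St := by
      intro y hy
      have h1 : |y - yU| ≤ ε := by
        rw [abs_of_pos (by linarith [hy.1])]
        linarith [hy.2]
      have := hslice (t, yU) hyU (y - yU) h1
      simpa [hSt_def] using this
    have hIco : Set.Ico (yL - ε) yL ⊆ St := by
      intro y hy
      have h1 : |y - yL| ≤ ε := by
        rw [abs_of_neg (by linarith [hy.2])]
        linarith [hy.1]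
      have := hslice (t, yL) hyL (y - yL) h1
      simpa [hSt_def] using this
    have d1 : Disjoint At (Set.Ioc yU (yU + ε)) := by
      rw [Set.disjoint_left]
      intro y hy hy'
      exact absurd (hub y hy) (not_le.2 hy'.1)
    have d2 : Disjoint (At ∪ Set.Ioc yU (yU + ε)) (Set.Ico (yL - ε) yL) := by
      rw [Set.disjoint_left]
      rintro y (hy | hy) hy'
      · exact absurd (hlb y hy) (not_le.2 hy'.2)
      · linarith [hy.1, hy'.2]
    have hcalc : volume At + ENNReal.ofReal ε + ENNReal.ofReal ε
        = volume ((At ∪ Set.Ioc yU (yU + ε)) ∪ Set.Ico (yL - ε) yL) := by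
      rw [measure_union d2 measurableSet_Ico, measure_union d1 measurableSet_Ioc,
        Real.volume_Ioc, Real.volume_Ico]
      congr 2 <;> ring_nf
    rw [hcalc]
    exact measure_mono (Set.union_subset (Set.union_subset hAtS hIoc) hIco)
  -- Fubini
  have hprod : (volume : Measure (ℝ × ℝ)) = (volume : Measure ℝ).prod volume :=
    MeasureTheory.Measure.volume_eq_prod ℝ ℝ
  have hfubS : volume S = ∫⁻ t, volume (Prod.mk t ⁻¹' S) := by
    rw [hprod, Measure.prod_apply hSm]
  have hfubA : volume A = ∫⁻ t, volume (Prod.mk t ⁻¹' A) := by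
    rw [hprod, Measure.prod_apply hAm]
  have hptwise : ∀ t, volume (Prod.mk t ⁻¹' A)
      + (Set.Icc m M).indicator (fun _ => ENNReal.ofReal (2 * ε)) t
      ≤ volume (Prod.mk t ⁻¹' S) := by
    intro t
    by_cases ht : t ∈ Set.Icc m M
    · rw [Set.indicator_of_mem ht]
      have h2ε : ENNReal.ofReal (2 * ε) = ENNReal.ofReal ε + ENNReal.ofReal ε := by
        rw [← ENNReal.ofReal_add hε.le hε.le]; ring_nf
      rw [h2ε, ← add_assoc]
      exact hslice_est t ht
    · rw [Set.indicator_of_notMem ht, add_zero]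
      exact measure_mono (Set.preimage_mono hAS)
  have hint : volume A + ENNReal.ofReal (2 * ε) * volume (Set.Icc m M)
      ≤ volume S := by
    calc volume A + ENNReal.ofReal (2 * ε) * volume (Set.Icc m M)
        = ∫⁻ t, (volume (Prod.mk t ⁻¹' A)
            + (Set.Icc m M).indicator (fun _ => ENNReal.ofReal (2 * ε)) t) := by
          rw [lintegral_add_left (measurable_measure_prodMk_left hAm),
            lintegral_indicator_const measurableSet_Icc, ← hfubA]
      _ ≤ ∫⁻ t, volume (Prod.mk t ⁻¹' S) := lintegral_mono hptwise
      _ = volume S := hfubS.symm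
  -- conclude
  have hfin : ENNReal.ofReal (2 * ε * d) ≤ ENNReal.ofReal (2 * ε) * volume (Set.Icc m M) := by
    rw [Real.volume_Icc, ← ENNReal.ofReal_mul (by positivity)]
    exact ENNReal.ofReal_le_ofReal (by nlinarith)
  calc volume K + ENNReal.ofReal (2 * ε * d)
      ≤ volume A + ENNReal.ofReal (2 * ε) * volume (Set.Icc m M) := by
        rw [hvolA]; exact add_le_add_right hfin _
    _ ≤ volume S := hint
    _ = volume (cthickening ε K) := hvolS

/-- The diameter of a compact connected planar set is at most half of its
Minkowski perimeter (when the limit defining the Minkowski perimeter exists). -/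
theorem stmt_3 (K : Set (EuclideanSpace ℝ (Fin 2)))
    (hK : IsCompact K) (hKconn : IsConnected K) (P : ℝ)
    (hP : Filter.Tendsto
      (fun ε : ℝ => ((volume (cthickening ε K)).toReal - (volume K).toReal) / ε)
      (nhdsWithin 0 (Set.Ioi 0)) (nhds P)) :
    Metric.diam K ≤ P / 2 := by
  have hfinK : volume K ≠ ⊤ := hK.measure_lt_top.ne
  have hfinε : ∀ ε : ℝ, volume (cthickening ε K) ≠ ⊤ := fun ε =>
    (hK.isBounded.cthickening.measure_lt_top).ne
  have hmono : ∀ ε : ℝ, (volume K).toReal ≤ (volume (cthickening ε K)).toReal := fun ε =>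
    ENNReal.toReal_mono (hfinε ε) (measure_mono (self_subset_cthickening K))
  have hP0 : 0 ≤ P := by
    refine ge_of_tendsto hP (eventually_mem_nhdsWithin.mono fun ε hε => ?_)
    have hε' : (0:ℝ) < ε := hε
    exact div_nonneg (sub_nonneg.2 (hmono ε)) hε'.le
  have hmain : ∀ x ∈ K, ∀ y ∈ K, dist x y ≤ P / 2 := by
    intro x hx y hy
    by_cases hxy : x = y
    · rw [hxy, dist_self]; linarith
    have h2d : 2 * dist x y ≤ P := by
      refine ge_of_tendsto hP (eventually_mem_nhdsWithin.mono fun ε hε => ?_)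
      have hε' : (0:ℝ) < ε := hε
      have hkey := key_vol K hK hKconn.isPreconnected hx hy hxy hε'
      have h1 : (volume K).toReal + 2 * ε * dist x y
          ≤ (volume (cthickening ε K)).toReal := by
        have := ENNReal.toReal_mono (hfinε ε) hkey
        rwa [ENNReal.toReal_add hfinK ENNReal.ofReal_ne_top,
          ENNReal.toReal_ofReal (by positivity)] at this
      rw [le_div_iff₀ hε']
      nlinarith
    linarith
  exact Metric.diam_le_of_forall_dist_le (by linarith) hmain
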